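/- Let G = Z_{n_1} × ... × Z_{n_{s-1}} × Z_{n_s} be a finite abelian group with n_1 | n_2 | ... | n_s. If H is a subgroup of G isomorphic to the cyclic group Z_{n_s}, then the quotient G/H is isomorphic to Z_{n_1} × ... × Z_{n_{s-1}}. -/

import Mathlib

private lemma aux_coprime (a b N : ℕ) (hN : 0 < N) (hab : Nat.Coprime a b) :
    ∃ μ : ℕ, Nat.Coprime (a + μ * b) N := by
  classical
  refine ⟨∏ p ∈ N.primeFactors.filter (fun p => ¬ p ∣ a), p, ?_⟩
  set μ := ∏ p ∈ N.primeFactors.filter (fun p => ¬ p ∣ a), p with hμ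
  by_contra h
  obtain ⟨p, hp, hpm, hpN⟩ := Nat.Prime.not_coprime_iff_dvd.mp h
  by_cases hpa : p ∣ a
  · have hpb : ¬ p ∣ b := fun hb => Nat.Prime.one_lt hp |>.ne' <|
      Nat.eq_one_of_dvd_one (hab ▸ Nat.dvd_gcd hpa hb)
    have hpμ : ¬ p ∣ μ := by
      intro hdvd
      obtain ⟨q, hq, hpq⟩ := (Nat.Prime.prime hp).exists_mem_finset_dvd hdvd
      simp only [Finset.mem_filter, Nat.mem_primeFactors] at hq
      exact hq.2 (((Nat.prime_dvd_prime_iff_eq hp hq.1.1).mp hpq) ▸ hpa)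
    have : p ∣ μ * b := (Nat.dvd_add_right hpa).mp hpm
    rcases (Nat.Prime.dvd_mul hp).mp this with h' | h'
    · exact hpμ h'
    · exact hpb h'
  · have hpμ : p ∣ μ := Finset.dvd_prod_of_mem _ (by
      simp only [Finset.mem_filter, Nat.mem_primeFactors]
      exact ⟨⟨hp, hpN, hN.ne'⟩, hpa⟩)
    rw [add_comm] at hpm
    exact hpa ((Nat.dvd_add_right (hpμ.mul_right b)).mp hpm)

private lemma aux_gcd_add_mul (a b N : ℕ) (hN : 0 < N) :
    ∃ μ : ℕ, Nat.gcd (a + μ * b) N = Nat.gcd (Nat.gcd a b) N := by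
  rcases Nat.eq_zero_or_pos (Nat.gcd a b) with hg | hg
  · obtain ⟨rfl, rfl⟩ := Nat.gcd_eq_zero_iff.mp hg
    exact ⟨0, by simp⟩
  · obtain ⟨μ, hμ⟩ := aux_coprime (a / Nat.gcd a b) (b / Nat.gcd a b) N hN
      (Nat.coprime_div_gcd_div_gcd hg)
    refine ⟨μ, ?_⟩
    have ha : Nat.gcd a b * (a / Nat.gcd a b) = a := Nat.mul_div_cancel' (Nat.gcd_dvd_left a b)
    have hb : Nat.gcd a b * (b / Nat.gcd a b) = b := Nat.mul_div_cancel' (Nat.gcd_dvd_right a b)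
    have : a + μ * b = Nat.gcd a b * (a / Nat.gcd a b + μ * (b / Nat.gcd a b)) := by
      rw [Nat.mul_add, ha]
      congr 1
      rw [← Nat.mul_assoc, Nat.mul_comm (Nat.gcd a b) μ, Nat.mul_assoc, hb]
    rw [this, Nat.Coprime.gcd_mul_right_cancel _ hμ]

private lemma aux_gcd_sum {ι : Type*} [DecidableEq ι] (N : ℕ) (hN : 0 < N) (b : ι → ℕ)
    (t : Finset ι) (a : ℕ) :
    ∃ μ : ι → ℕ, Nat.gcd (a + ∑ j ∈ t, μ j * b j) N ∣ Nat.gcd (Nat.gcd a (t.gcd b)) N := by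
  induction t using Finset.induction_on with
  | empty =>
      refine ⟨fun _ => 0, ?_⟩
      simp
  | insert j t hj ih =>
      obtain ⟨μ, hμ⟩ := ih
      obtain ⟨ν, hν⟩ := aux_gcd_add_mul (a + ∑ k ∈ t, μ k * b k) (b j) N hN
      refine ⟨Function.update μ j ν, ?_⟩
      have hsum : ∑ k ∈ insert j t, Function.update μ j ν k * b k
          = (∑ k ∈ t, μ k * b k) + ν * b j := by
        rw [Finset.sum_insert hj, Function.update_self, add_comm]
        congr 1
        refine Finset.sum_congr rfl fun k hk => ?_
        have hkj : k ≠ j := by rintro rfl; exact hj hk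
        rw [Function.update_of_ne hkj]
      rw [hsum, ← add_assoc, hν, Finset.gcd_insert]
      -- goal : gcd (gcd X (b j)) N ∣ gcd (gcd a (gcd (b j) (t.gcd b))) N
      set X := a + ∑ k ∈ t, μ k * b k with hX
      have h1 : Nat.gcd (Nat.gcd X (b j)) N ∣ Nat.gcd X N :=
        Nat.dvd_gcd ((Nat.gcd_dvd_left _ _).trans (Nat.gcd_dvd_left _ _)) (Nat.gcd_dvd_right _ _)
      have h2 := h1.trans hμ
      apply Nat.dvd_gcd _ (Nat.gcd_dvd_right _ _)
      apply Nat.dvd_gcd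
      · exact h2.trans ((Nat.gcd_dvd_left _ _).trans (Nat.gcd_dvd_left _ _))
      · apply dvd_gcd
        · exact (Nat.gcd_dvd_left _ _).trans (Nat.gcd_dvd_right _ _)
        · exact h2.trans ((Nat.gcd_dvd_left _ _).trans (Nat.gcd_dvd_right _ _))

/-- If `G = Z_{n_1} × ... × Z_{n_s}` with `n_1 | n_2 | ... | n_s` and `H` is a
subgroup of `G` isomorphic to the cyclic group `Z_{n_s}`, then
`G/H ≅ Z_{n_1} × ... × Z_{n_{s-1}}`. -/
theorem stmt0 (s : ℕ) (n : Fin (s + 1) → ℕ) (hpos : ∀ i, 0 < n i)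
    (hdvd : ∀ i : Fin s, n i.castSucc ∣ n i.succ)
    (H : AddSubgroup (∀ i : Fin (s + 1), ZMod (n i)))
    (hH : Nonempty (H ≃+ ZMod (n (Fin.last s)))) :
    Nonempty (((∀ i : Fin (s + 1), ZMod (n i)) ⧸ H) ≃+
      ∀ i : Fin s, ZMod (n i.castSucc)) := by
  classical
  obtain ⟨e⟩ := hH
  haveI : ∀ i, NeZero (n i) := fun i => ⟨(hpos i).ne'⟩
  -- the chain of divisibilities
  have chain : ∀ j i : Fin (s + 1), i ≤ j → n i ∣ n j := by
    intro j
    induction j using Fin.induction with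
    | zero =>
        intro i hi
        have : i = 0 := le_antisymm hi (Fin.zero_le i)
        rw [this]
    | succ j ih =>
        intro i hi
        rcases Nat.lt_or_ge i.val (j.succ.val) with h | h
        · have hij : i ≤ j.castSucc := by
            rw [Fin.le_def]
            simpa [Fin.val_succ] using Nat.lt_succ_iff.mp (by simpa [Fin.val_succ] using h)
          exact (ih i hij).trans (hdvd j)
        · have : i = j.succ := le_antisymm hi (by rw [Fin.le_def]; exact h)
          rw [this]
  have dvdN : ∀ i, n i ∣ n (Fin.last s) := fun i => chain (Fin.last s) i (Fin.le_last i)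
  set N : ℕ := n (Fin.last s) with hNdef
  have hNpos : 0 < N := hpos _
  -- the generator of H
  set g : ∀ i, ZMod (n i) := ((e.symm 1 : H) : ∀ i, ZMod (n i)) with hgdef
  have hord : addOrderOf g = N := by
    rw [hgdef, AddSubgroup.addOrderOf_coe, AddEquiv.addOrderOf_eq, ZMod.addOrderOf_one]
  have hHg : H = AddSubgroup.zmultiples g := by
    apply le_antisymm
    · intro x hx
      rw [AddSubgroup.mem_zmultiples_iff]
      refine ⟨((e ⟨x, hx⟩).val : ℤ), ?_⟩
      have h1 : ((e ⟨x, hx⟩).val : ℤ) • (1 : ZMod N) = e ⟨x, hx⟩ := by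
        rw [zsmul_one]
        push_cast
        exact ZMod.natCast_rightInverse _
      calc ((e ⟨x, hx⟩).val : ℤ) • g
          = ((((e ⟨x, hx⟩).val : ℤ) • (e.symm 1) : H) : ∀ i, ZMod (n i)) := by
            rw [hgdef]; norm_cast
        _ = ((e.symm (((e ⟨x, hx⟩).val : ℤ) • 1) : H) : ∀ i, ZMod (n i)) := by
            rw [map_zsmul]
        _ = x := by rw [h1, AddEquiv.symm_apply_apply]
    · exact AddSubgroup.zmultiples_le_of_mem (hgdef ▸ (e.symm 1).2)
  -- the numeric invariants
  set b : Fin (s + 1) → ℕ := fun i => (N / n i) * (g i).val with hbdef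
  set D : ℕ := Nat.gcd (Nat.gcd (b (Fin.last s))
    (Finset.univ.gcd (fun j : Fin s => b j.castSucc))) N with hDdef
  have hDpos : 0 < D := Nat.gcd_pos_of_pos_right _ hNpos
  have hDdvdN : D ∣ N := Nat.gcd_dvd_right _ _
  have hDb : ∀ i : Fin (s + 1), D ∣ b i := by
    intro i
    induction i using Fin.lastCases with
    | last => exact (Nat.gcd_dvd_left _ _).trans (Nat.gcd_dvd_left _ _)
    | cast j =>
        exact ((Nat.gcd_dvd_left _ _).trans (Nat.gcd_dvd_right _ _)).trans
          (Finset.gcd_dvd (Finset.mem_univ j))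
  have hD1 : D = 1 := by
    have hkey : ∀ i, n i ∣ (N / D) * (g i).val := by
      intro i
      obtain ⟨k, hk⟩ := hDb i
      have hpos' : 0 < N / n i := Nat.div_pos (Nat.le_of_dvd hNpos (dvdN i)) (hpos i)
      refine ⟨k, ?_⟩
      apply Nat.eq_of_mul_eq_mul_left hpos'
      calc (N / n i) * ((N / D) * (g i).val)
          = (N / D) * ((N / n i) * (g i).val) := by ring
        _ = (N / D) * (D * k) := by rw [show N / n i * (g i).val = D * k from hk]
        _ = ((N / D) * D) * k := by ring
        _ = N * k := by rw [Nat.div_mul_cancel hDdvdN]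
        _ = ((N / n i) * n i) * k := by rw [Nat.div_mul_cancel (dvdN i)]
        _ = (N / n i) * (n i * k) := by ring
    have hsmul : (N / D) • g = 0 := by
      funext i
      have : g i = (((g i).val : ℕ) : ZMod (n i)) := (ZMod.natCast_rightInverse _).symm
      rw [Pi.smul_apply, Pi.zero_apply, this, ← Nat.cast_smul_eq_nsmul (ZMod (n i)),
        Nat.cast_smul_eq_nsmul, nsmul_eq_mul, ← Nat.cast_mul,
        ZMod.natCast_eq_zero_iff]
      exact hkey i
    have hNdvd : N ∣ N / D := by
      have := addOrderOf_dvd_of_nsmul_eq_zero hsmul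
      rwa [hord] at this
    have h1 : 0 < N / D := Nat.div_pos (Nat.le_of_dvd hNpos hDdvdN) hDpos
    have h4 : N / D = N := le_antisymm (Nat.div_le_self _ _) (Nat.le_of_dvd h1 hNdvd)
    have h5 : N / D * D = N := Nat.div_mul_cancel hDdvdN
    rw [h4] at h5
    exact Nat.eq_of_mul_eq_mul_left hNpos (by rw [h5, Nat.mul_one])
  obtain ⟨μ, hμ⟩ := aux_gcd_sum N hNpos (fun j : Fin s => b j.castSucc) Finset.univ
    (b (Fin.last s))
  rw [← hDdef, hD1] at hμ
  set A : ℕ := b (Fin.last s) + ∑ j : Fin s, μ j * b j.castSucc with hAdef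
  have hcop : Nat.Coprime A N := Nat.eq_one_of_dvd_one hμ
  -- the homomorphisms φ_j : ZMod (n j.castSucc) →+ ZMod N
  have hφzero : ∀ j : Fin s,
      (zmultiplesHom (ZMod N) (((N / n j.castSucc : ℕ)) : ZMod N)) (n j.castSucc : ℤ) = 0 := by
    intro j
    show ((n j.castSucc : ℤ)) • (((N / n j.castSucc : ℕ)) : ZMod N) = 0
    rw [zsmul_eq_mul]
    push_cast
    rw [← Nat.cast_mul, Nat.mul_div_cancel' (dvdN j.castSucc), hNdef, ZMod.natCast_self]
  set φ : ∀ j : Fin s, ZMod (n j.castSucc) →+ ZMod N :=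
    fun j => ZMod.lift (n j.castSucc)
      ⟨zmultiplesHom (ZMod N) (((N / n j.castSucc : ℕ)) : ZMod N), hφzero j⟩ with hφdef
  have hφval : ∀ (j : Fin s) (x : ZMod (n j.castSucc)),
      φ j x = (((N / n j.castSucc) * x.val : ℕ) : ZMod N) := by
    intro j x
    have hx : ((x.val : ℤ) : ZMod (n j.castSucc)) = x := by
      push_cast
      exact ZMod.natCast_rightInverse _
    conv_lhs => rw [← hx]
    rw [hφdef, ZMod.lift_coe]
    show ((x.val : ℤ)) • (((N / n j.castSucc : ℕ)) : ZMod N) = _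
    rw [zsmul_eq_mul]
    push_cast
    ring
  set ψ : (∀ i, ZMod (n i)) →+ ZMod N :=
    ∑ j : Fin s, (μ j • φ j).comp (Pi.evalAddMonoidHom (fun i => ZMod (n i)) j.castSucc)
    with hψdef
  have hψapp : ∀ x : ∀ i, ZMod (n i), ψ x = ∑ j : Fin s, μ j • φ j (x j.castSucc) := by
    intro x
    rw [hψdef]
    simp [AddMonoidHom.finset_sum_apply]
  have hψupd : ∀ (x : ∀ i, ZMod (n i)) (v : ZMod N),
      ψ (Function.update x (Fin.last s) v) = ψ x := by
    intro x v
    rw [hψapp, hψapp]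
    refine Finset.sum_congr rfl fun j _ => ?_
    rw [Function.update_of_ne (Fin.castSucc_lt_last j).ne]
  have hψg : ψ g = ((∑ j : Fin s, μ j * b j.castSucc : ℕ) : ZMod N) := by
    rw [hψapp]
    push_cast
    refine Finset.sum_congr rfl fun j _ => ?_
    rw [hφval, nsmul_eq_mul]
  set u : (ZMod N)ˣ := ZMod.unitOfCoprime A hcop with hudef
  -- first automorphism
  set Φ₁ : (∀ i, ZMod (n i)) ≃+ (∀ i, ZMod (n i)) :=
    { toFun := fun x => Function.update x (Fin.last s)
        ((↑u⁻¹ : ZMod N) * (x (Fin.last s) + ψ x))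
      invFun := fun y => Function.update y (Fin.last s)
        ((↑u : ZMod N) * y (Fin.last s) - ψ y)
      left_inv := by
        intro x
        funext i
        by_cases hi : i = Fin.last s
        · subst hi
          simp only [hψupd, Function.update_self]
          rw [← mul_assoc, Units.mul_inv, one_mul, add_sub_cancel_right]
        · simp only [Function.update_of_ne hi]
      right_inv := by
        intro y
        funext i
        by_cases hi : i = Fin.last s
        · subst hi
          simp only [hψupd, Function.update_self]
          rw [sub_add_cancel, ← mul_assoc, Units.inv_mul, one_mul]
        · simp only [Function.update_of_ne hi]
      map_add' := by
        intro x y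
        funext i
        by_cases hi : i = Fin.last s
        · subst hi
          simp only [Pi.add_apply, Function.update_self, map_add]
          ring
        · simp only [Pi.add_apply, Function.update_of_ne hi] } with hΦ₁def
  -- second automorphism
  set Φ₂ : (∀ i, ZMod (n i)) ≃+ (∀ i, ZMod (n i)) :=
    { toFun := fun x => fun i => Fin.lastCases (motive := fun i => ZMod (n i))
        (x (Fin.last s))
        (fun j => x j.castSucc -
          g j.castSucc * (ZMod.castHom (dvdN j.castSucc) (ZMod (n j.castSucc)) (x (Fin.last s)))) i
      invFun := fun y => fun i => Fin.lastCases (motive := fun i => ZMod (n i))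
        (y (Fin.last s))
        (fun j => y j.castSucc +
          g j.castSucc * (ZMod.castHom (dvdN j.castSucc) (ZMod (n j.castSucc)) (y (Fin.last s)))) i
      left_inv := by
        intro x
        funext i
        induction i using Fin.lastCases with
        | last => simp
        | cast j => simp
      right_inv := by
        intro y
        funext i
        induction i using Fin.lastCases with
        | last => simp
        | cast j => simp
      map_add' := by
        intro x y
        funext i
        induction i using Fin.lastCases with
        | last => simp
        | cast j =>
            simp only [Fin.lastCases_castSucc, Pi.add_apply, map_add]
            ring } with hΦ₂def
  set Φ : (∀ i, ZMod (n i)) ≃+ (∀ i, ZMod (n i)) := Φ₁.trans Φ₂ with hΦdef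
  -- computation of Φ g
  have hblast : ((b (Fin.last s) : ℕ) : ZMod N) = g (Fin.last s) := by
    rw [hbdef]
    show ((N / N * (g (Fin.last s)).val : ℕ) : ZMod N) = _
    simp only [Nat.div_self hNpos, one_mul]
    exact ZMod.natCast_rightInverse _
  have hΦ₁g : Φ₁ g = Function.update g (Fin.last s) 1 := by
    have : (↑u⁻¹ : ZMod N) * (g (Fin.last s) + ψ g) = 1 := by
      rw [hψg, ← hblast, ← Nat.cast_add, ← hAdef]
      have : ((A : ℕ) : ZMod N) = (u : ZMod N) := (ZMod.coe_unitOfCoprime A hcop).symm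
      rw [this]
      norm_cast
      exact u.inv_mul
    rw [hΦ₁def]
    show Function.update g (Fin.last s) _ = _
    rw [this]
  have hΦg : ∀ i, Φ g i = Fin.lastCases (motive := fun i => ZMod (n i)) 1 (fun _ => 0) i := by
    intro i
    rw [hΦdef]
    show Φ₂ (Φ₁ g) i = _
    rw [hΦ₁g]
    induction i using Fin.lastCases with
    | last => simp [hΦ₂def]
    | cast j =>
        simp only [hΦ₂def, AddEquiv.coe_mk, Equiv.coe_fn_mk, Fin.lastCases_castSucc,
          Function.update_self, Function.update_of_ne (Fin.castSucc_lt_last j).ne, map_one,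
          mul_one, sub_self]
  -- the projection
  set π : (∀ i : Fin (s + 1), ZMod (n i)) →+ (∀ j : Fin s, ZMod (n j.castSucc)) :=
    { toFun := fun x j => x j.castSucc
      map_zero' := rfl
      map_add' := fun x y => rfl } with hπdef
  have hπsurj : Function.Surjective π := by
    intro y
    refine ⟨fun i => Fin.lastCases (motive := fun i => ZMod (n i)) 0 (fun j => y j) i, ?_⟩
    funext j
    show (fun i => Fin.lastCases (motive := fun i => ZMod (n i)) 0 (fun j => y j) i) j.castSucc = y j
    simp
  have hkermap : H.map (Φ : (∀ i, ZMod (n i)) →+ (∀ i, ZMod (n i))) = π.ker := by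
    rw [hHg, AddMonoidHom.map_zmultiples]
    ext x
    constructor
    · intro hx
      obtain ⟨k, hk⟩ := AddSubgroup.mem_zmultiples_iff.mp hx
      rw [AddMonoidHom.mem_ker]
      funext j
      show (x j.castSucc) = 0
      rw [← hk]
      simp only [AddMonoidHom.coe_coe]
      rw [Pi.smul_apply, hΦg, Fin.lastCases_castSucc, smul_zero]
    · intro hx
      have hx' : ∀ j : Fin s, x j.castSucc = 0 := fun j => congrFun hx j
      rw [AddSubgroup.mem_zmultiples_iff]
      refine ⟨((x (Fin.last s)).val : ℤ), ?_⟩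
      funext i
      simp only [AddMonoidHom.coe_coe]
      rw [Pi.smul_apply, hΦg]
      induction i using Fin.lastCases with
      | last =>
          rw [Fin.lastCases_last, zsmul_one]
          push_cast
          exact ZMod.natCast_rightInverse _
      | cast j => rw [Fin.lastCases_castSucc, smul_zero, hx' j]
  exact ⟨(QuotientAddGroup.congr H π.ker Φ hkermap).trans
    (QuotientAddGroup.quotientKerEquivOfSurjective π hπsurj)⟩
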